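/- For every δ ∈ [0,1), max{ (5−2δ)/(3−δ), (3−δ)/(2−δ), 1/(1−δ) } ≥ (1+√5)/2, and for δ = (3−√5)/2 all three quantities (5−2δ)/(3−δ), (3−δ)/(2−δ), and 1/(1−δ) are equal to (1+√5)/2; hence the minimum over δ ∈ [0,1) of this maximum equals the golden ratio (1+√5)/2 and is attained at δ = (3−√5)/2. -/
import Mathlib


/-- The maximum of the three quantities appearing in the golden-ratio analysis. -/
noncomputable def triMax (δ : ℝ) : ℝ :=
  max (max ((5 - 2 * δ) / (3 - δ)) ((3 - δ) / (2 - δ))) (1 / (1 - δ))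

lemma sqrt5_sq : Real.sqrt 5 ^ 2 = 5 := Real.sq_sqrt (by norm_num)

lemma sqrt5_pos : (0:ℝ) < Real.sqrt 5 := Real.sqrt_pos.mpr (by norm_num)

lemma lower (δ : ℝ) (h0 : 0 ≤ δ) (h1 : δ < 1) :
    (1 + Real.sqrt 5) / 2 ≤ triMax δ := by
  have s2 := sqrt5_sq
  have sp := sqrt5_pos
  unfold triMax
  rcases le_or_gt δ ((3 - Real.sqrt 5)/2) with h | h
  · refine le_trans ?_ (le_max_left _ _)
    refine le_trans ?_ (le_max_left _ _)
    rw [div_le_div_iff₀ (by norm_num) (by linarith)]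
    nlinarith
  · refine le_trans ?_ (le_max_right _ _)
    rw [div_le_div_iff₀ (by norm_num) (by linarith)]
    nlinarith

lemma eq1 : (5 - 2 * ((3 - Real.sqrt 5) / 2)) / (3 - (3 - Real.sqrt 5) / 2)
    = (1 + Real.sqrt 5) / 2 := by
  have s2 := sqrt5_sq
  have sp := sqrt5_pos
  rw [div_eq_iff (by nlinarith)]
  nlinarith

lemma eq2 : (3 - (3 - Real.sqrt 5) / 2) / (2 - (3 - Real.sqrt 5) / 2)
    = (1 + Real.sqrt 5) / 2 := by
  have s2 := sqrt5_sq
  have sp := sqrt5_pos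
  rw [div_eq_iff (by nlinarith)]
  nlinarith

lemma eq3 : 1 / (1 - (3 - Real.sqrt 5) / 2) = (1 + Real.sqrt 5) / 2 := by
  have s2 := sqrt5_sq
  have sp := sqrt5_pos
  rw [div_eq_iff (by nlinarith)]
  nlinarith

/-- for every `δ ∈ [0,1)` the maximum of the three quantities is at least the
golden ratio `(1+√5)/2`; at `δ = (3-√5)/2` all three quantities equal the golden ratio;
hence the minimum over `δ ∈ [0,1)` of the maximum equals the golden ratio and is attained. -/
theorem triMax_golden :
    (∀ δ : ℝ, 0 ≤ δ → δ < 1 → (1 + Real.sqrt 5) / 2 ≤ triMax δ) ∧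
    ((5 - 2 * ((3 - Real.sqrt 5) / 2)) / (3 - (3 - Real.sqrt 5) / 2)
        = (1 + Real.sqrt 5) / 2 ∧
      (3 - (3 - Real.sqrt 5) / 2) / (2 - (3 - Real.sqrt 5) / 2)
        = (1 + Real.sqrt 5) / 2 ∧
      1 / (1 - (3 - Real.sqrt 5) / 2) = (1 + Real.sqrt 5) / 2) ∧
    IsLeast (triMax '' Set.Ico (0 : ℝ) 1) ((1 + Real.sqrt 5) / 2) := by
  have s2 := sqrt5_sq
  have sp := sqrt5_pos
  refine ⟨lower, ⟨eq1, eq2, eq3⟩, ?_, ?_⟩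
  · refine ⟨(3 - Real.sqrt 5) / 2, ⟨by nlinarith, by nlinarith⟩, ?_⟩
    unfold triMax
    rw [eq1, eq2, eq3, max_self, max_self]
  · rintro x ⟨δ, ⟨h0, h1⟩, rfl⟩
    exact lower δ h0 h1
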